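/- For every π-term P, the normal form function satisfies P ≡ nf(P); in particular every π-term is structurally congruent to a term in normal form. -/

import Mathlib

namespace PiCalcFormal

attribute [local instance] Classical.propDecidable

/-- Action prefixes of the π-calculus: input `a(x)`, output `ā⟨b⟩`, and `τ`. -/
inductive Pre : Type where
  | inp (a x : ℕ)
  | out (a b : ℕ)
  | tau
deriving DecidableEq

mutual
/-- π-calculus processes with guarded replication.  Each restriction carries
an annotation drawn from `A` (take `A := Unit` for plain, unannotated terms). -/
inductive Proc (A : Type) : Type where
  | nil : Proc A
  | nu (x : ℕ) (ann : A) (P : Proc A) : Proc A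
  | par (P Q : Proc A) : Proc A
  | choice (M : Cho A) : Proc A
  | bang (M : Cho A) : Proc A

/-- Choices (guarded sums). -/
inductive Cho (A : Type) : Type where
  | pre (π : Pre) (P : Proc A) : Cho A
  | sum (M N : Cho A) : Cho A
end

variable {A B T L : Type}

/-- Renaming of a single name: `subName x y z` replaces `x` by `y` in `z`. -/
def subName (x y z : ℕ) : ℕ := if z = x then y else z

def Pre.ren (x y : ℕ) : Pre → Pre
  | .inp a z => .inp (subName x y a) (subName x y z)
  | .out a b => .out (subName x y a) (subName x y b)
  | .tau => .tau

mutual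
/-- Free names of a process. -/
def Proc.fn : Proc A → Finset ℕ
  | .nil => ∅
  | .nu x _ P => P.fn.erase x
  | .par P Q => P.fn ∪ Q.fn
  | .choice M => M.fn
  | .bang M => M.fn
/-- Free names of a choice. -/
def Cho.fn : Cho A → Finset ℕ
  | .pre (.inp a z) P => insert a (P.fn.erase z)
  | .pre (.out a b) P => insert a (insert b P.fn)
  | .pre .tau P => P.fn
  | .sum M N => M.fn ∪ N.fn
end

mutual
/-- All bound names (binding occurrences, both restrictions and input binders). -/
def Proc.binders : Proc A → List ℕ
  | .nil => []
  | .nu x _ P => x :: P.binders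
  | .par P Q => P.binders ++ Q.binders
  | .choice M => M.binders
  | .bang M => M.binders
def Cho.binders : Cho A → List ℕ
  | .pre (.inp _ z) P => z :: P.binders
  | .pre _ P => P.binders
  | .sum M N => M.binders ++ N.binders
end

mutual
/-- All annotated restrictions `ν(x : τ)` occurring in a term. -/
def Proc.resAnns : Proc A → List (ℕ × A)
  | .nil => []
  | .nu x a P => (x, a) :: P.resAnns
  | .par P Q => P.resAnns ++ Q.resAnns
  | .choice M => M.resAnns
  | .bang M => M.resAnns
def Cho.resAnns : Cho A → List (ℕ × A)
  | .pre _ P => P.resAnns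
  | .sum M N => M.resAnns ++ N.resAnns
end

mutual
/-- Total renaming of a name `x` to `y` (used for α-conversion with `y` fresh). -/
def Proc.ren (x y : ℕ) : Proc A → Proc A
  | .nil => .nil
  | .nu z a P => .nu (subName x y z) a (P.ren x y)
  | .par P Q => .par (P.ren x y) (Q.ren x y)
  | .choice M => .choice (M.ren x y)
  | .bang M => .bang (M.ren x y)
def Cho.ren (x y : ℕ) : Cho A → Cho A
  | .pre π P => .pre (π.ren x y) (P.ren x y)
  | .sum M N => .sum (M.ren x y) (N.ren x y)
end

mutual
/-- Substitution `P{x ↦ b}` of the name `b` for free occurrences of `x`. -/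
def Proc.subst (x b : ℕ) : Proc A → Proc A
  | .nil => .nil
  | .nu z a P => if z = x then .nu z a P else .nu z a (P.subst x b)
  | .par P Q => .par (P.subst x b) (Q.subst x b)
  | .choice M => .choice (M.subst x b)
  | .bang M => .bang (M.subst x b)
def Cho.subst (x b : ℕ) : Cho A → Cho A
  | .pre (.inp a z) P =>
      .pre (.inp (subName x b a) z) (if z = x then P else P.subst x b)
  | .pre (.out a c) P => .pre (.out (subName x b a) (subName x b c)) (P.subst x b)
  | .pre .tau P => .pre .tau (P.subst x b)
  | .sum M N => .sum (M.subst x b) (N.subst x b)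
end

mutual
/-- Erase the restriction annotations of a term. -/
def Proc.eraseAnn : Proc A → Proc Unit
  | .nil => .nil
  | .nu x _ P => .nu x () P.eraseAnn
  | .par P Q => .par P.eraseAnn Q.eraseAnn
  | .choice M => .choice M.eraseAnn
  | .bang M => .bang M.eraseAnn
def Cho.eraseAnn : Cho A → Cho Unit
  | .pre π P => .pre π P.eraseAnn
  | .sum M N => .sum M.eraseAnn N.eraseAnn
end

/-- `νx₁….νxₙ.P` for a list of annotated restrictions. -/
def nuList : List (ℕ × A) → Proc A → Proc A
  | [], P => P
  | (x, a) :: X, P => .nu x a (nuList X P)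

/-- `A₁ ‖ ⋯ ‖ Aₘ` (the empty product is `0`). -/
def parList : List (Proc A) → Proc A
  | [] => .nil
  | [P] => P
  | P :: Ps => .par P (parList Ps)

/-- Nesting of restrictions `nest_ν`. -/
def Proc.nest : Proc A → ℕ
  | .nil => 0
  | .nu _ _ P => P.nest + 1
  | .par P Q => max P.nest Q.nest
  | .choice _ => 0
  | .bang _ => 0

mutual
/-- Structural congruence on processes: least relation respecting α-conversion,
associativity/commutativity of `+` and `‖` with `0` neutral, the restriction
laws, replication unfolding and scope extrusion.  Annotations are invariant
under α-conversion and replication. -/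
inductive SC : Proc A → Proc A → Prop where
  | refl (P : Proc A) : SC P P
  | symm {P Q : Proc A} : SC P Q → SC Q P
  | trans {P Q R : Proc A} : SC P Q → SC Q R → SC P R
  | nuCong (x : ℕ) (a : A) {P Q : Proc A} : SC P Q → SC (.nu x a P) (.nu x a Q)
  | parCong {P P' Q Q' : Proc A} : SC P P' → SC Q Q' → SC (.par P Q) (.par P' Q')
  | choiceCong {M M' : Cho A} : SCc M M' → SC (.choice M) (.choice M')
  | bangCong {M M' : Cho A} : SCc M M' → SC (.bang M) (.bang M')
  | parComm (P Q : Proc A) : SC (.par P Q) (.par Q P)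
  | parAssoc (P Q R : Proc A) : SC (.par (.par P Q) R) (.par P (.par Q R))
  | parNil (P : Proc A) : SC (.par P .nil) P
  | nuNil (x : ℕ) (a : A) : SC (.nu x a .nil) .nil
  | nuExch (x : ℕ) (a : A) (y : ℕ) (b : A) (P : Proc A) :
      SC (.nu x a (.nu y b P)) (.nu y b (.nu x a P))
  | bangUnfold (M : Cho A) : SC (.bang M) (.par (.choice M) (.bang M))
  | extrude (x : ℕ) (a : A) (P Q : Proc A) :
      x ∉ P.fn → SC (.par P (.nu x a Q)) (.nu x a (.par P Q))
  | alpha (x y : ℕ) (a : A) (P : Proc A) :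
      y ∉ P.fn → y ∉ P.binders → SC (.nu x a P) (.nu y a (P.ren x y))
/-- Structural congruence on choices. -/
inductive SCc : Cho A → Cho A → Prop where
  | refl (M : Cho A) : SCc M M
  | symm {M N : Cho A} : SCc M N → SCc N M
  | trans {M N O : Cho A} : SCc M N → SCc N O → SCc M O
  | preCong (π : Pre) {P Q : Proc A} : SC P Q → SCc (.pre π P) (.pre π Q)
  | sumCong {M M' N N' : Cho A} : SCc M M' → SCc N N' → SCc (.sum M N) (.sum M' N')
  | sumComm (M N : Cho A) : SCc (.sum M N) (.sum N M)
  | sumAssoc (M N O : Cho A) : SCc (.sum (.sum M N) O) (.sum M (.sum N O))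
  | alphaInp (a x y : ℕ) (P : Proc A) :
      y ∉ P.fn → y ∉ P.binders → SCc (.pre (.inp a x) P) (.pre (.inp a y) (P.ren x y))
end

/-- `Summand M π P` holds when `π.P` is one of the summands of the choice `M`
(so that `M ≡ π.P + M'` for the remaining, possibly empty, summands `M'`). -/
inductive Summand : Cho A → Pre → Proc A → Prop where
  | head (π : Pre) (P : Proc A) : Summand (.pre π P) π P
  | left {M : Cho A} (N : Cho A) {π : Pre} {P : Proc A} :
      Summand M π P → Summand (.sum M N) π P
  | right (M : Cho A) {N : Cho A} {π : Pre} {P : Proc A} :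
      Summand N π P → Summand (.sum M N) π P

/-- Reduction relation of the (annotated) π-calculus.
A communication `P → Q` requires `P ≡ νW.(S ‖ R ‖ C)` with
`S = (ā⟨b⟩.νYs.S′)+Ms`, `R = (a(x).νYr.R′)+Mr` and
`Q ≡ νW Ys′ Yr′.(S′ ‖ R′{x↦b} ‖ C)`; the annotations of the restrictions
activated by the transition (`Ys`, `Yr`, resp. `Y`) may be re-chosen, while all
other (in particular all active) annotations are preserved.  For `A := Unit`
this is the ordinary reduction relation. -/
inductive Step : Proc A → Proc A → Prop where
  | comm {P Q : Proc A} (W Ys Yr Ys' Yr' : List (ℕ × A)) (S R : Cho A)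
      (C S' R' : Proc A) (a b x : ℕ) :
      Summand S (.out a b) (nuList Ys S') →
      Summand R (.inp a x) (nuList Yr R') →
      Ys.map Prod.fst = Ys'.map Prod.fst →
      Yr.map Prod.fst = Yr'.map Prod.fst →
      SC P (nuList W (.par (.choice S) (.par (.choice R) C))) →
      SC Q (nuList (W ++ Ys' ++ Yr') (.par S' (.par (R'.subst x b) C))) →
      Step P Q
  | tauStep {P Q : Proc A} (W Y Y' : List (ℕ × A)) (C P' : Proc A) :
      Y.map Prod.fst = Y'.map Prod.fst →
      SC P (nuList W (.par (.choice (.pre .tau (nuList Y P'))) C)) →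
      SC Q (nuList (W ++ Y') (.par P' C)) →
      Step P Q

/-- Reachability: reflexive-transitive closure of reduction. -/
def Reach (P Q : Proc A) : Prop := Relation.ReflTransGen Step P Q

/-- Depth of a term: minimal nesting of restrictions over its congruence class. -/
noncomputable def depth (P : Proc A) : ℕ := sInf {n | ∃ Q, SC P Q ∧ Q.nest = n}

/-- A term is depth-bounded if the depth of all reachable terms is uniformly bounded. -/
def DepthBounded (P : Proc A) : Prop := ∃ k, ∀ Q, Reach P Q → depth Q ≤ k

mutual
/-- Normal forms: `νx₁…xₙ.(A₁ ‖ ⋯ ‖ Aₘ)`, every `Aᵢ` a (possibly replicated)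
choice, with all continuations again in normal form. -/
inductive NFP : Proc A → Prop where
  | mk (X : List (ℕ × A)) (As : List (Proc A)) :
      (∀ A' ∈ As, NFS A') → NFP (nuList X (parList As))
/-- Sequential normal forms: choices or replicated choices. -/
inductive NFS : Proc A → Prop where
  | choice {M : Cho A} : NFC M → NFS (.choice M)
  | bang {M : Cho A} : NFC M → NFS (.bang M)
/-- Normal-form choices. -/
inductive NFC : Cho A → Prop where
  | pre (π : Pre) {P : Proc A} : NFP P → NFC (.pre π P)
  | sum {M N : Cho A} : NFC M → NFC N → NFC (.sum M N)
end

/-- Strip the maximal prefix of top-level restrictions. -/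
def Proc.strip : Proc A → List (ℕ × A) × Proc A
  | .nu x a P => ((x, a) :: P.strip.1, P.strip.2)
  | P => ([], P)

mutual
/-- The normal form function `nf`. -/
def Proc.nf : Proc A → Proc A
  | .nil => .nil
  | .nu x a P => .nu x a P.nf
  | .choice M => .choice M.nf
  | .bang M => .bang M.nf
  | .par P Q =>
    match P.nf, Q.nf with
    | .nil, q => q
    | p, .nil => p
    | p, q => nuList (p.strip.1 ++ q.strip.1) (.par p.strip.2 q.strip.2)
def Cho.nf : Cho A → Cho A
  | .pre π P => .pre π P.nf
  | .sum M N => .sum M.nf N.nf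
end

/-- Name uniqueness (Barendregt) convention: every name is bound at most once
and free and bound names are disjoint. -/
def NameUniq (P : Proc A) : Prop := P.binders.Nodup ∧ ∀ x ∈ P.binders, x ∉ P.fn

/-- A Gödel numbering of plain π-terms. -/
def Pre.encode : Pre → ℕ
  | .inp a x => Nat.pair 0 (Nat.pair a x)
  | .out a b => Nat.pair 1 (Nat.pair a b)
  | .tau => Nat.pair 2 0

mutual
def Proc.encode : Proc Unit → ℕ
  | .nil => Nat.pair 0 0
  | .nu x _ P => Nat.pair 1 (Nat.pair x P.encode)
  | .par P Q => Nat.pair 2 (Nat.pair P.encode Q.encode)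
  | .choice M => Nat.pair 3 M.encode
  | .bang M => Nat.pair 4 M.encode
def Cho.encode : Cho Unit → ℕ
  | .pre π P => Nat.pair 0 (Nat.pair π.encode P.encode)
  | .sum M N => Nat.pair 1 (Nat.pair M.encode N.encode)
end
/-- Finite labelled rose trees. -/
inductive Tree (L : Type) : Type where
  | node (label : L) (children : List (Tree L)) : Tree L

/-- Labelled forests (finite lists of labelled trees, considered up to
isomorphism via `ForestIso`). -/
abbrev Forest (L : Type) := List (Tree L)

def Tree.label : Tree L → L
  | .node l _ => l

def Tree.children : Tree L → List (Tree L)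
  | .node _ cs => cs

/-- `Subtree s t`: `s` occurs as a subtree (node) of `t`. -/
inductive Subtree : Tree L → Tree L → Prop where
  | refl (t : Tree L) : Subtree t t
  | child {s c : Tree L} (l : L) (cs : List (Tree L)) :
      c ∈ cs → Subtree s c → Subtree s (.node l cs)

/-- `u` is a node of the forest `φ`. -/
def NodeOf (u : Tree L) (φ : Forest L) : Prop := ∃ t ∈ φ, Subtree u t

/-- `IsTrace t tr`: `tr` is the sequence of labels along a downward path of
consecutive parent-child nodes starting at the root of `t`. -/
inductive IsTrace : Tree L → List L → Prop where
  | single (l : L) (cs : List (Tree L)) : IsTrace (.node l cs) [l]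
  | cons {c : Tree L} {tr : List L} (l : L) (cs : List (Tree L)) :
      c ∈ cs → IsTrace c tr → IsTrace (.node l cs) (l :: tr)

/-- `tr` is the trace of some path of the forest `φ` (starting at any node). -/
def ForestTrace (φ : Forest L) (tr : List L) : Prop :=
  ∃ t ∈ φ, ∃ s, Subtree s t ∧ IsTrace s tr

mutual
/-- Isomorphism of labelled trees (children are unordered). -/
inductive TreeIso : Tree L → Tree L → Prop where
  | node (l : L) {cs cs' : List (Tree L)} :
      ForestIso cs cs' → TreeIso (.node l cs) (.node l cs')
/-- Isomorphism of labelled forests: a bijection of nodes respecting the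
parent relation and the labelling (permutation of sibling lists). -/
inductive ForestIso : Forest L → Forest L → Prop where
  | nil : ForestIso ([] : Forest L) []
  | cons {t t' : Tree L} {f f' : Forest L} :
      TreeIso t t' → ForestIso f f' → ForestIso (t :: f) (t' :: f')
  | swap (t₁ t₂ : Tree L) (f : Forest L) : ForestIso (t₁ :: t₂ :: f) (t₂ :: t₁ :: f)
  | trans {f g h : Forest L} : ForestIso f g → ForestIso g h → ForestIso f h
end

/-- The forest representation of a term.  Restriction nodes are labelled with
the pair of the restricted name and the image of its annotation under `b`
(for annotated terms, `b` is `Ty.baseOf`; for plain terms take `b := id`);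
leaves are labelled with the active sequential subterms. -/
def Proc.forestB (b : A → T) : Proc A → Forest ((ℕ × T) ⊕ Proc A)
  | .nil => []
  | .nu x a P => [Tree.node (Sum.inl (x, b a)) (P.forestB b)]
  | .par P Q => P.forestB b ++ Q.forestB b
  | .choice M => [Tree.node (Sum.inr (.choice M)) []]
  | .bang M => [Tree.node (Sum.inr (.bang M)) []]

/-- `φ ∈ F⟦P⟧`: the forest `φ` is (isomorphic to) the forest representation
of some term structurally congruent to `P`. -/
def Proc.inForests (b : A → T) (P : Proc A) (φ : Forest ((ℕ × T) ⊕ Proc A)) : Prop :=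
  ∃ Q, SC P Q ∧ ForestIso φ (Q.forestB b)

/-- The restriction height of a forest: the length of the longest path formed
of nodes labelled with names. -/
noncomputable def heightNu (φ : Forest ((ℕ × T) ⊕ B)) : ℕ :=
  sSup {k | ∃ (tr : List ((ℕ × T) ⊕ B)) (xs : List (ℕ × T)),
    ForestTrace φ tr ∧ tr = xs.map Sum.inl ∧ k = xs.length}

/-- A hierarchy: a finite forest `(T, ≺)` of base types, presented by a parent
function whose induced ancestor relation is acyclic. -/
structure BaseForest : Type 1 where
  T : Type
  fin : Fintype T
  parent : T → Option T
  acyclic : ∀ t : T, ¬ Relation.TransGen (fun a b : T => parent b = some a) t t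

/-- The strict (ancestor) order `<` of the hierarchy. -/
def BaseForest.lt (F : BaseForest) : F.T → F.T → Prop :=
  Relation.TransGen (fun a b : F.T => F.parent b = some a)

/-- Types over base types `T`: `τ ::= t | t[τ]`. -/
inductive Ty (T : Type) : Type where
  | base (t : T)
  | chan (t : T) (arg : Ty T)

/-- The base type of a type. -/
def Ty.baseOf : Ty T → T
  | .base t => t
  | .chan t _ => t

/-- `T`-compatibility of a forest: along every trace
`(x₁,t₁) … (xₖ,tₖ) A` ending in a (sequential) leaf label, the base types
satisfy `t₁ < t₂ < ⋯ < tₖ`. -/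
def TCompatF (lt : T → T → Prop) (φ : Forest ((ℕ × T) ⊕ B)) : Prop :=
  ∀ (tr : List ((ℕ × T) ⊕ B)) (xs : List (ℕ × T)) (Aend : B),
    ForestTrace φ tr → tr = xs.map Sum.inl ++ [Sum.inr Aend] →
    List.Chain' (fun p q => lt p.2 q.2) xs

/-- A `T`-annotated term is `T`-compatible if some forest in `F⟦P⟧` is. -/
def TCompatible (F : BaseForest) (P : Proc (Ty F.T)) : Prop :=
  ∃ φ, P.inForests Ty.baseOf φ ∧ TCompatF F.lt φ

mutual
/-- `SubProc Q P`: `Q` is a subterm of the process `P`. -/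
inductive SubProc : Proc A → Proc A → Prop where
  | refl (P : Proc A) : SubProc P P
  | nu (x : ℕ) (a : A) {Q P : Proc A} : SubProc Q P → SubProc Q (.nu x a P)
  | parL {Q P P' : Proc A} : SubProc Q P → SubProc Q (.par P P')
  | parR {Q P P' : Proc A} : SubProc Q P' → SubProc Q (.par P P')
  | choice {Q : Proc A} {M : Cho A} : SubCho Q M → SubProc Q (.choice M)
  | bang {Q : Proc A} {M : Cho A} : SubCho Q M → SubProc Q (.bang M)
/-- `SubCho Q M`: `Q` is a subterm of the choice `M`. -/
inductive SubCho : Proc A → Cho A → Prop where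
  | pre (π : Pre) {Q P : Proc A} : SubProc Q P → SubCho Q (.pre π P)
  | sumL {Q : Proc A} {M N : Cho A} : SubCho Q M → SubCho Q (.sum M N)
  | sumR {Q : Proc A} {M N : Cho A} : SubCho Q N → SubCho Q (.sum M N)
end

/-- A term is `T`-shaped if each of its subterms is `T`-compatible. -/
def TShaped (F : BaseForest) (P : Proc (Ty F.T)) : Prop :=
  ∀ Q, SubProc Q P → TCompatible F Q

/-- A plain π-term is hierarchical if for some finite forest `T` of base types
there is a consistent annotation of its transition system (a lifting of `→` to
annotated terms, preserving the annotations of active restrictions) all of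
whose reachable annotated terms are `T`-compatible. -/
def Hierarchical (P : Proc Unit) : Prop :=
  ∃ (F : BaseForest) (P' : Proc (Ty F.T)) (R : Set (Proc (Ty F.T))),
    P'.eraseAnn = P ∧ P' ∈ R ∧
    (∀ Q' ∈ R, TCompatible F Q') ∧
    (∀ Q' ∈ R, ∀ Q : Proc Unit, Step Q'.eraseAnn Q →
      ∃ Q'' : Proc (Ty F.T), Step Q' Q'' ∧ Q''.eraseAnn = Q ∧ Q'' ∈ R)
/-- The `i`-th parallel component of a normal form `νX.∏ᵢ Aᵢ`. -/
def compAt (As : List (Proc A)) (i : ℕ) : Proc A := As.getD i .nil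

/-- `Aᵢ` is linked to `Aⱼ` in `νX.∏ᵢ Aᵢ`: they share a restricted name of `X`. -/
def Linked (X : List (ℕ × A)) (As : List (Proc A)) (i j : ℕ) : Prop :=
  i < As.length ∧ j < As.length ∧
    ∃ x, (∃ a, (x, a) ∈ X) ∧ x ∈ (compAt As i).fn ∧ x ∈ (compAt As j).fn

/-- The tied-to relation: transitive closure of linked-to. -/
def Tied (X : List (ℕ × A)) (As : List (Proc A)) : ℕ → ℕ → Prop :=
  Relation.TransGen (Linked X As)

/-- A name `y` is tied to `Aᵢ` in `νX.∏ᵢ Aᵢ` if `y ∈ fn(Aⱼ)` for some `j` tied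
to `i`.  For the input-prefixed normal form `a(y).νX.∏ᵢ Aᵢ`, the component
`Aᵢ` is migratable precisely when `y` is tied to `Aᵢ`. -/
def NameTied (X : List (ℕ × A)) (As : List (Proc A)) (y : ℕ) (i : ℕ) : Prop :=
  ∃ j, y ∈ (compAt As j).fn ∧ Tied X As j i

/-- Type environments: partial maps from names to types. -/
abbrev Env (T : Type) := ℕ → Option (Ty T)

/-- Extension `Γ, X` of an environment by a list of type assignments. -/
def Env.extend (Γ : Env T) (X : List (ℕ × Ty T)) : Env T := fun y =>
  match X.find? (fun p => p.1 == y) with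
  | some p => some p.2
  | none => Γ y

/-- `Γ(s) = {Γ(y) | y ∈ s ∩ dom Γ}`. -/
def Env.image (Γ : Env T) (s : Finset ℕ) : Set (Ty T) := {τ | ∃ y ∈ s, Γ y = some τ}

/-- Domain of an environment. -/
def Env.dom (Γ : Env T) : Set ℕ := {y | (Γ y).isSome}

/-- Union of two environments (with disjoint domains; left-biased). -/
def Env.union (Γ Γ' : Env T) : Env T := fun y =>
  match Γ y with
  | some τ => some τ
  | none => Γ' y

mutual
/-- The type system for hierarchical terms: judgement `Γ ⊢_T P` for annotated
normal forms (rule Par). -/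
inductive TypP (F : BaseForest) : Env F.T → Proc (Ty F.T) → Prop where
  | par (Γ : Env F.T) (X : List (ℕ × Ty F.T)) (As : List (Proc (Ty F.T)))
      (hseq : ∀ A' ∈ As, TypS F (Γ.extend X) A')
      (hord : ∀ p ∈ X, ∀ i, NameTied X As p.1 i →
        ∀ τ ∈ Γ.image (compAt As i).fn, F.lt τ.baseOf p.2.baseOf) :
      TypP F Γ (nuList X (parList As))
/-- Typing of sequential terms (rules Choice and Repl). -/
inductive TypS (F : BaseForest) : Env F.T → Proc (Ty F.T) → Prop where
  | choice {Γ : Env F.T} {M : Cho (Ty F.T)} (hM : TypC F Γ M) : TypS F Γ (.choice M)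
  | bang {Γ : Env F.T} {M : Cho (Ty F.T)} (hM : TypC F Γ M) : TypS F Γ (.bang M)
/-- Typing of choices (rules Sum, Tau, Out and In). -/
inductive TypC (F : BaseForest) : Env F.T → Cho (Ty F.T) → Prop where
  | sum {Γ : Env F.T} {M N : Cho (Ty F.T)} (hM : TypC F Γ M) (hN : TypC F Γ N) :
      TypC F Γ (.sum M N)
  | tau {Γ : Env F.T} {P : Proc (Ty F.T)} (hP : TypP F Γ P) : TypC F Γ (.pre .tau P)
  | out {Γ : Env F.T} {a b : ℕ} {ta : F.T} {τb : Ty F.T} {Q : Proc (Ty F.T)}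
      (ha : Γ a = some (.chan ta τb)) (hb : Γ b = some τb) (hQ : TypP F Γ Q) :
      TypC F Γ (.pre (.out a b) Q)
  | inp (Γ : Env F.T) (a x : ℕ) (ta : F.T) (τx : Ty F.T)
      (X : List (ℕ × Ty F.T)) (As : List (Proc (Ty F.T)))
      (ha : Γ a = some (.chan ta τx))
      (hcont : TypP F (Γ.extend [(x, τx)]) (nuList X (parList As)))
      (hmig : F.lt τx.baseOf ta ∨
        ∀ i, NameTied X As x i →
          ∀ τ ∈ Γ.image ((compAt As i).fn \ {a}), F.lt τ.baseOf ta) :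
      TypC F Γ (.pre (.inp a x) (nuList X (parList As)))
end

/-- `Γ` is `P`-safe: for every free name `x` of `P` (in the domain of `Γ`) and
every restriction annotation `(y : τ)` occurring in `P`,
`base(Γ(x)) < base(τ)`. -/
def PSafe (F : BaseForest) (Γ : Env F.T) (P : Proc (Ty F.T)) : Prop :=
  ∀ x ∈ P.fn, ∀ τx, Γ x = some τx → ∀ p ∈ P.resAnns, F.lt τx.baseOf p.2.baseOf

/-- Auxiliary, fuel-indexed version of `Φ_T` (the fuel `|X|` always suffices). -/
noncomputable def PhiAux (F : BaseForest) :
    ℕ → List (ℕ × Ty F.T) → List (Proc (Ty F.T)) → Forest ((ℕ × F.T) ⊕ Proc (Ty F.T))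
  | _, [], As => As.map fun A' => Tree.node (Sum.inr A') []
  | 0, _ :: _, As => As.map fun A' => Tree.node (Sum.inr A') []
  | n + 1, p0 :: X', As =>
      let X := p0 :: X'
      let mins := X.filter fun p => decide (∀ q ∈ X, ¬ F.lt q.2.baseOf p.2.baseOf)
      let Ix : ℕ × Ty F.T → List ℕ := fun p =>
        (List.range As.length).filter fun i => decide (NameTied X As p.1 i)
      let Yx : ℕ × Ty F.T → List (ℕ × Ty F.T) := fun p =>
        X.filter fun q => decide ((∃ i ∈ Ix p, q.1 ∈ (compAt As i).fn) ∧ q ∉ mins)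
      let Z := X.filter fun q => decide (q ∉ mins ∧ ∀ p ∈ mins, q ∉ Yx p)
      let R := (List.range As.length).filter fun i => decide (∀ p ∈ mins, i ∉ Ix p)
      (mins.map fun p =>
        Tree.node (Sum.inl (p.1, p.2.baseOf))
          (PhiAux F n (Yx p) ((Ix p).map fun i => compAt As i)))
        ++ PhiAux F n Z (R.map fun i => compAt As i)

/-- The canonical `T`-compatible forest candidate `Φ_T` of a normal form
`νX.∏ᵢ Aᵢ`. -/
noncomputable def Phi (F : BaseForest) (X : List (ℕ × Ty F.T))
    (As : List (Proc (Ty F.T))) : Forest ((ℕ × F.T) ⊕ Proc (Ty F.T)) :=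
  PhiAux F X.length X As
/-- All labels of the nodes of a tree. -/
def Tree.labels : Tree L → List L
  | .node l cs => l :: (cs.attach.map fun c => Tree.labels c.1).flatten
decreasing_by
  have := List.sizeOf_lt_of_mem c.2
  simp only [Tree.node.sizeOf_spec]
  omega

/-- All labels of the nodes of a forest. -/
def forestLabels (φ : Forest L) : List L := (φ.map Tree.labels).flatten

/-- The name labels of a forest (with multiplicity). -/
def nameLabels (φ : Forest ((ℕ × T) ⊕ B)) : List ℕ :=
  (forestLabels φ).filterMap fun l =>
    match l with
    | .inl p => some p.1
    | .inr _ => none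

/-- The sequential-term labels of a forest (with multiplicity). -/
def seqLabels (φ : Forest ((ℕ × T) ⊕ B)) : List B :=
  (forestLabels φ).filterMap fun l =>
    match l with
    | .inl _ => none
    | .inr A' => some A'

/-! ### Auxiliary lemmas for Statement 14 -/

lemma nuList_append (X Y : List (ℕ × A)) (P : Proc A) :
    nuList (X ++ Y) P = nuList X (nuList Y P) := by
  induction X with
  | nil => rfl
  | cons p X ih => cases p; simp [nuList, ih]

lemma sc_nuList {P Q : Proc A} (X : List (ℕ × A)) (h : SC P Q) :
    SC (nuList X P) (nuList X Q) := by
  induction X with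
  | nil => exact h
  | cons p X ih => cases p; exact SC.nuCong _ _ ih

lemma binders_nuList (X : List (ℕ × A)) (P : Proc A) :
    (nuList X P).binders = X.map Prod.fst ++ P.binders := by
  induction X with
  | nil => rfl
  | cons p X ih => cases p; simp [nuList, Proc.binders, ih]

lemma fn_nuList_mono {P Q : Proc A} (X : List (ℕ × A)) (h : P.fn ⊆ Q.fn) :
    (nuList X P).fn ⊆ (nuList X Q).fn := by
  induction X with
  | nil => exact h
  | cons p X ih => cases p; exact Finset.erase_subset_erase _ ih

lemma fn_nuList_subset (X : List (ℕ × A)) (P : Proc A) :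
    (nuList X P).fn ⊆ P.fn := by
  induction X with
  | nil => exact fun _ h => h
  | cons p X ih =>
    cases p
    exact (Finset.erase_subset _ _).trans ih

lemma mem_fn_nuList {x : ℕ} (X : List (ℕ × A)) (P : Proc A) (h : x ∈ P.fn) :
    x ∈ (nuList X P).fn ∨ x ∈ X.map Prod.fst := by
  induction X with
  | nil => exact Or.inl h
  | cons p X ih =>
    cases p with
    | mk y a =>
      rcases ih with hm | hm
      · by_cases hxy : x = y
        · right; simp [hxy]
        · left; simpa [nuList, Proc.fn, Finset.mem_erase, hxy] using hm
      · right; simp only [List.map_cons, List.mem_cons]; exact Or.inr hm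

lemma fn_nuList_par (X : List (ℕ × A)) (P Q : Proc A) :
    (nuList X (.par P Q)).fn = (nuList X P).fn ∪ (nuList X Q).fn := by
  induction X with
  | nil => rfl
  | cons p X ih =>
    cases p
    simp [nuList, Proc.fn, ih, Finset.erase_union_distrib]

lemma extrudeList (X : List (ℕ × A)) {P Q : Proc A}
    (h : ∀ x ∈ X.map Prod.fst, x ∉ P.fn) :
    SC (.par P (nuList X Q)) (nuList X (.par P Q)) := by
  induction X with
  | nil => exact SC.refl _
  | cons p X ih =>
    cases p with
    | mk y a =>
      refine SC.trans (SC.extrude y a _ _ ?_) (SC.nuCong _ _ (ih ?_))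
      · exact h y (by simp)
      · intro x hx; exact h x (by simp [hx])

lemma sc_merge (Xp Xq : List (ℕ × A)) (Np Nq : Proc A)
    (h1 : ∀ x ∈ Xp.map Prod.fst, x ∉ (nuList Xq Nq).fn)
    (h2 : ∀ x ∈ Xq.map Prod.fst, x ∉ Np.fn) :
    SC (.par (nuList Xp Np) (nuList Xq Nq)) (nuList (Xp ++ Xq) (.par Np Nq)) := by
  rw [nuList_append]
  refine SC.trans (SC.parComm _ _) ?_
  refine SC.trans (extrudeList Xp h1) ?_
  refine sc_nuList _ ?_
  exact SC.trans (SC.parComm _ _) (extrudeList Xq h2)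

lemma strip_spec : ∀ (P : Proc A), nuList P.strip.1 P.strip.2 = P
  | .nil => rfl
  | .nu x a P => by simp [Proc.strip, nuList, strip_spec P]
  | .par _ _ => rfl
  | .choice _ => rfl
  | .bang _ => rfl

lemma sc_parList_cons (P : Proc A) (Ps : List (Proc A)) :
    SC (.par P (parList Ps)) (parList (P :: Ps)) := by
  cases Ps with
  | nil => exact SC.parNil _
  | cons Q Ps => exact SC.refl _

lemma sc_parList_append (As Bs : List (Proc A)) :
    SC (.par (parList As) (parList Bs)) (parList (As ++ Bs)) := by
  induction As with
  | nil => exact SC.trans (SC.parComm _ _) (SC.parNil _)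
  | cons P As ih =>
    refine SC.trans (SC.parCong (SC.symm (sc_parList_cons P As)) (SC.refl _)) ?_
    refine SC.trans (SC.parAssoc _ _ _) ?_
    exact SC.trans (SC.parCong (SC.refl _) ih) (sc_parList_cons _ _)

lemma nf_par_eq (P Q : Proc A) :
    (Proc.par P Q).nf =
      if P.nf = .nil then Q.nf
      else if Q.nf = .nil then P.nf
      else nuList (P.nf.strip.1 ++ Q.nf.strip.1) (.par P.nf.strip.2 Q.nf.strip.2) := by
  rcases hp : P.nf <;> rcases hq : Q.nf <;> simp [Proc.nf, hp, hq]

lemma fn_nuList_append_par (Xp Xq : List (ℕ × A)) (Np Nq : Proc A) :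
    (nuList (Xp ++ Xq) (.par Np Nq)).fn ⊆ (nuList Xp Np).fn ∪ (nuList Xq Nq).fn := by
  rw [fn_nuList_par]
  apply Finset.union_subset_union
  · rw [nuList_append]; exact fn_nuList_mono Xp (fn_nuList_subset Xq Np)
  · rw [nuList_append]; exact fn_nuList_subset Xp _

lemma mem_binders_nuList_append_par {y : ℕ} (Xp Xq : List (ℕ × A)) (Np Nq : Proc A)
    (h : y ∈ (nuList (Xp ++ Xq) (.par Np Nq)).binders) :
    y ∈ (nuList Xp Np).binders ∨ y ∈ (nuList Xq Nq).binders := by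
  simp only [binders_nuList, Proc.binders, List.map_append, List.mem_append] at h ⊢
  tauto

lemma fn_parList_cons (P : Proc A) (Ps : List (Proc A)) :
    (parList (P :: Ps)).fn = P.fn ∪ (parList Ps).fn := by
  cases Ps <;> simp [parList, Proc.fn]

lemma fn_parList_append (As Bs : List (Proc A)) :
    (parList (As ++ Bs)).fn = (parList As).fn ∪ (parList Bs).fn := by
  induction As with
  | nil => simp [parList, Proc.fn]
  | cons P As ih =>
    rw [List.cons_append, fn_parList_cons, fn_parList_cons, ih, Finset.union_assoc]

lemma mem_binders_parList_cons {y : ℕ} (P : Proc A) (Ps : List (Proc A)) :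
    y ∈ (parList (P :: Ps)).binders ↔ y ∈ P.binders ∨ y ∈ (parList Ps).binders := by
  cases Ps <;> simp [parList, Proc.binders]

lemma mem_binders_parList_append {y : ℕ} (As Bs : List (Proc A)) :
    y ∈ (parList (As ++ Bs)).binders ↔
      y ∈ (parList As).binders ∨ y ∈ (parList Bs).binders := by
  induction As with
  | nil => simp [parList, Proc.binders]
  | cons P As ih =>
    rw [List.cons_append, mem_binders_parList_cons, mem_binders_parList_cons, ih, or_assoc]

lemma par_hyps {P Q : Proc A} (h1 : (Proc.par P Q).binders.Nodup)
    (h2 : ∀ x ∈ (Proc.par P Q).binders, x ∉ (Proc.par P Q).fn) :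
    P.binders.Nodup ∧ Q.binders.Nodup ∧ (∀ y ∈ P.binders, y ∉ Q.binders) ∧
      (∀ x ∈ P.binders, x ∉ P.fn) ∧ (∀ x ∈ Q.binders, x ∉ Q.fn) ∧
      (∀ x ∈ P.binders, x ∉ Q.fn) ∧ (∀ x ∈ Q.binders, x ∉ P.fn) := by
  have hb : (Proc.par P Q).binders = P.binders ++ Q.binders := rfl
  have hf : (Proc.par P Q).fn = P.fn ∪ Q.fn := rfl
  rw [hb, List.nodup_append] at h1
  simp only [hb, hf, List.mem_append, Finset.mem_union] at h2
  refine ⟨h1.1, h1.2.1, fun y hy hq => h1.2.2 y hy y hq rfl, ?_, ?_, ?_, ?_⟩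
  · intro x hx hc; exact h2 x (Or.inl hx) (Or.inl hc)
  · intro x hx hc; exact h2 x (Or.inr hx) (Or.inr hc)
  · intro x hx hc; exact h2 x (Or.inl hx) (Or.inr hc)
  · intro x hx hc; exact h2 x (Or.inr hx) (Or.inl hc)

mutual
theorem procEx : ∀ (P : Proc A), P.binders.Nodup → (∀ x ∈ P.binders, x ∉ P.fn) →
    ∃ (X : List (ℕ × A)) (As : List (Proc A)), (∀ A' ∈ As, NFS A') ∧
      SC P (nuList X (parList As)) ∧
      (nuList X (parList As)).fn ⊆ P.fn ∧
      (∀ y ∈ (nuList X (parList As)).binders, y ∈ P.binders)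
  | .nil, _, _ =>
    ⟨[], [], by simp, SC.refl _, by simp [nuList, parList, Proc.fn],
      by simp [nuList, parList, Proc.binders]⟩
  | .nu x a P, h1, h2 => by
    have hbnu : (Proc.nu x a P).binders = x :: P.binders := rfl
    have hfnu : (Proc.nu x a P).fn = P.fn.erase x := rfl
    rw [hbnu, List.nodup_cons] at h1
    have h2' : ∀ y ∈ P.binders, y ∉ P.fn := by
      intro y hy hyf
      have hne : y ≠ x := fun h => h1.1 (h ▸ hy)
      exact h2 y (by rw [hbnu]; exact List.mem_cons_of_mem _ hy)
        (by rw [hfnu]; exact Finset.mem_erase.mpr ⟨hne, hyf⟩)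
    obtain ⟨X, As, hAs, hsc, hfn, hb⟩ := procEx P h1.2 h2'
    refine ⟨(x, a) :: X, As, hAs, SC.nuCong _ _ hsc, ?_, ?_⟩
    · rw [hfnu]; exact Finset.erase_subset_erase _ hfn
    · intro y hy
      rw [hbnu]
      simp only [nuList, Proc.binders, List.mem_cons] at hy ⊢
      exact hy.imp id (hb y)
  | .choice M, h1, h2 => by
    obtain ⟨M', hN, hsc, hfn, hb⟩ := choEx M h1 h2
    refine ⟨[], [.choice M'], ?_, SC.choiceCong hsc, hfn, hb⟩
    rintro A' hA'
    rcases List.mem_singleton.mp hA' with rfl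
    exact NFS.choice hN
  | .bang M, h1, h2 => by
    obtain ⟨M', hN, hsc, hfn, hb⟩ := choEx M h1 h2
    refine ⟨[], [.bang M'], ?_, SC.bangCong hsc, hfn, hb⟩
    rintro A' hA'
    rcases List.mem_singleton.mp hA' with rfl
    exact NFS.bang hN
  | .par P Q, h1, h2 => by
    obtain ⟨hnP, hnQ, hdisj, hPP, hQQ, hPQ, hQP⟩ := par_hyps h1 h2
    obtain ⟨Xp, Asp, hAsp, hscp, hfnp, hbp⟩ := procEx P hnP hPP
    obtain ⟨Xq, Asq, hAsq, hscq, hfnq, hbq⟩ := procEx Q hnQ hQQ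
    have hXpP : ∀ x ∈ Xp.map Prod.fst, x ∈ P.binders := by
      intro x hx
      exact hbp x (by rw [binders_nuList]; exact List.mem_append_left _ hx)
    have hXqQ : ∀ x ∈ Xq.map Prod.fst, x ∈ Q.binders := by
      intro x hx
      exact hbq x (by rw [binders_nuList]; exact List.mem_append_left _ hx)
    have c1 : ∀ x ∈ Xp.map Prod.fst, x ∉ (nuList Xq (parList Asq)).fn := by
      intro x hx hc
      exact hPQ x (hXpP x hx) (hfnq hc)
    have c2 : ∀ x ∈ Xq.map Prod.fst, x ∉ (parList Asp).fn := by
      intro x hx hc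
      rcases mem_fn_nuList Xp _ hc with hm | hm
      · exact hQP x (hXqQ x hx) (hfnp hm)
      · exact hdisj x (hXpP x hm) (hXqQ x hx)
    refine ⟨Xp ++ Xq, Asp ++ Asq, ?_, ?_, ?_, ?_⟩
    · intro A' hA'
      rcases List.mem_append.mp hA' with h | h
      · exact hAsp _ h
      · exact hAsq _ h
    · refine SC.trans (SC.parCong hscp hscq) ?_
      refine SC.trans (sc_merge Xp Xq _ _ c1 c2) ?_
      exact sc_nuList _ (sc_parList_append Asp Asq)
    · have hfe : (parList (Asp ++ Asq)).fn = (Proc.par (parList Asp) (parList Asq)).fn := by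
        rw [fn_parList_append]; rfl
      refine (fn_nuList_mono (Xp ++ Xq) (le_of_eq hfe)).trans ?_
      refine (fn_nuList_append_par Xp Xq _ _).trans ?_
      exact Finset.union_subset_union hfnp hfnq
    · intro y hy
      rw [binders_nuList, List.mem_append, List.map_append, List.mem_append,
        mem_binders_parList_append] at hy
      have hmem : y ∈ (nuList Xp (parList Asp)).binders ∨
          y ∈ (nuList Xq (parList Asq)).binders := by
        rw [binders_nuList, binders_nuList, List.mem_append, List.mem_append]
        tauto
      show y ∈ P.binders ++ Q.binders
      rw [List.mem_append]
      exact hmem.imp (hbp y) (hbq y)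

theorem choEx : ∀ (M : Cho A), M.binders.Nodup → (∀ x ∈ M.binders, x ∉ M.fn) →
    ∃ M' : Cho A, NFC M' ∧ SCc M M' ∧ M'.fn ⊆ M.fn ∧
      (∀ y ∈ M'.binders, y ∈ M.binders)
  | .pre (.inp a z) P, h1, h2 => by
    have hb : (Cho.pre (.inp a z) P : Cho A).binders = z :: P.binders := rfl
    have hf : (Cho.pre (.inp a z) P : Cho A).fn = insert a (P.fn.erase z) := rfl
    rw [hb, List.nodup_cons] at h1
    have h2' : ∀ y ∈ P.binders, y ∉ P.fn := by
      intro y hy hyf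
      have hne : y ≠ z := fun h => h1.1 (h ▸ hy)
      refine h2 y (by rw [hb]; exact List.mem_cons_of_mem _ hy) ?_
      rw [hf]
      exact Finset.mem_insert_of_mem (Finset.mem_erase.mpr ⟨hne, hyf⟩)
    obtain ⟨X, As, hAs, hsc, hfn, hbs⟩ := procEx P h1.2 h2'
    refine ⟨.pre (.inp a z) (nuList X (parList As)),
      NFC.pre _ (NFP.mk X As hAs), SCc.preCong _ hsc, ?_, ?_⟩
    · show insert a ((nuList X (parList As)).fn.erase z) ⊆ insert a (P.fn.erase z)
      exact Finset.insert_subset_insert _ (Finset.erase_subset_erase _ hfn)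
    · intro y hy
      rw [hb]
      rcases List.mem_cons.mp hy with rfl | hy
      · exact List.mem_cons_self
      · exact List.mem_cons_of_mem _ (hbs y hy)
  | .pre (.out a b) P, h1, h2 => by
    have h2' : ∀ y ∈ P.binders, y ∉ P.fn := by
      intro y hy hyf
      exact h2 y hy (Finset.mem_insert_of_mem (Finset.mem_insert_of_mem hyf))
    obtain ⟨X, As, hAs, hsc, hfn, hbs⟩ := procEx P h1 h2'
    refine ⟨.pre (.out a b) (nuList X (parList As)),
      NFC.pre _ (NFP.mk X As hAs), SCc.preCong _ hsc, ?_, hbs⟩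
    show insert a (insert b (nuList X (parList As)).fn) ⊆ insert a (insert b P.fn)
    exact Finset.insert_subset_insert _ (Finset.insert_subset_insert _ hfn)
  | .pre .tau P, h1, h2 => by
    obtain ⟨X, As, hAs, hsc, hfn, hbs⟩ := procEx P h1 h2
    exact ⟨.pre .tau (nuList X (parList As)),
      NFC.pre _ (NFP.mk X As hAs), SCc.preCong _ hsc, hfn, hbs⟩
  | .sum M N, h1, h2 => by
    have hb : (Cho.sum M N : Cho A).binders = M.binders ++ N.binders := rfl
    have hf : (Cho.sum M N : Cho A).fn = M.fn ∪ N.fn := rfl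
    rw [hb, List.nodup_append] at h1
    simp only [hb, hf, List.mem_append, Finset.mem_union] at h2
    obtain ⟨M', hNM, hscM, hfnM, hbM⟩ := choEx M h1.1
      (fun x hx hc => h2 x (Or.inl hx) (Or.inl hc))
    obtain ⟨N', hNN, hscN, hfnN, hbN⟩ := choEx N h1.2.1
      (fun x hx hc => h2 x (Or.inr hx) (Or.inr hc))
    refine ⟨.sum M' N', NFC.sum hNM hNN, SCc.sumCong hscM hscN, ?_, ?_⟩
    · show M'.fn ∪ N'.fn ⊆ (Cho.sum M N : Cho A).fn
      rw [hf]
      exact Finset.union_subset_union hfnM hfnN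
    · intro y hy
      rw [hb, List.mem_append]
      rcases List.mem_append.mp hy with h | h
      · exact Or.inl (hbM y h)
      · exact Or.inr (hbN y h)
end

mutual
theorem procNf : ∀ (P : Proc A), P.binders.Nodup → (∀ x ∈ P.binders, x ∉ P.fn) →
    SC P P.nf ∧ P.nf.fn ⊆ P.fn ∧ (∀ y ∈ P.nf.binders, y ∈ P.binders)
  | .nil, _, _ => by
    refine ⟨?_, ?_, ?_⟩ <;> simp [Proc.nf] <;> exact SC.refl _
  | .nu x a P, h1, h2 => by
    have hbnu : (Proc.nu x a P).binders = x :: P.binders := rfl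
    have hfnu : (Proc.nu x a P).fn = P.fn.erase x := rfl
    rw [hbnu, List.nodup_cons] at h1
    have h2' : ∀ y ∈ P.binders, y ∉ P.fn := by
      intro y hy hyf
      have hne : y ≠ x := fun h => h1.1 (h ▸ hy)
      exact h2 y (by rw [hbnu]; exact List.mem_cons_of_mem _ hy)
        (by rw [hfnu]; exact Finset.mem_erase.mpr ⟨hne, hyf⟩)
    obtain ⟨hsc, hfn, hb⟩ := procNf P h1.2 h2'
    have hnf : (Proc.nu x a P).nf = .nu x a P.nf := by rw [Proc.nf]
    rw [hnf]
    refine ⟨SC.nuCong _ _ hsc, ?_, ?_⟩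
    · rw [hfnu]; exact Finset.erase_subset_erase _ hfn
    · intro y hy
      rw [hbnu]
      rcases List.mem_cons.mp hy with rfl | hy
      · exact List.mem_cons_self
      · exact List.mem_cons_of_mem _ (hb y hy)
  | .choice M, h1, h2 => by
    obtain ⟨hsc, hfn, hb⟩ := choNf M h1 h2
    have hnf : (Proc.choice M).nf = .choice M.nf := by rw [Proc.nf]
    rw [hnf]
    exact ⟨SC.choiceCong hsc, hfn, hb⟩
  | .bang M, h1, h2 => by
    obtain ⟨hsc, hfn, hb⟩ := choNf M h1 h2
    have hnf : (Proc.bang M).nf = .bang M.nf := by rw [Proc.nf]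
    rw [hnf]
    exact ⟨SC.bangCong hsc, hfn, hb⟩
  | .par P Q, h1, h2 => by
    obtain ⟨hnP, hnQ, hdisj, hPP, hQQ, hPQ, hQP⟩ := par_hyps h1 h2
    obtain ⟨hscp, hfnp, hbp⟩ := procNf P hnP hPP
    obtain ⟨hscq, hfnq, hbq⟩ := procNf Q hnQ hQQ
    have hbpar : (Proc.par P Q).binders = P.binders ++ Q.binders := rfl
    have hfpar : (Proc.par P Q).fn = P.fn ∪ Q.fn := rfl
    have hsc0 : SC (Proc.par P Q) (.par P.nf Q.nf) := SC.parCong hscp hscq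
    rw [nf_par_eq]
    by_cases hp : P.nf = .nil
    · rw [if_pos hp]
      rw [hp] at hsc0
      refine ⟨SC.trans hsc0 (SC.trans (SC.parComm _ _) (SC.parNil _)), ?_, ?_⟩
      · rw [hfpar]; exact hfnq.trans Finset.subset_union_right
      · intro y hy
        rw [hbpar, List.mem_append]
        exact Or.inr (hbq y hy)
    · rw [if_neg hp]
      by_cases hq : Q.nf = .nil
      · rw [if_pos hq]
        rw [hq] at hsc0
        refine ⟨SC.trans hsc0 (SC.parNil _), ?_, ?_⟩
        · rw [hfpar]; exact hfnp.trans Finset.subset_union_left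
        · intro y hy
          rw [hbpar, List.mem_append]
          exact Or.inl (hbp y hy)
      · rw [if_neg hq]
        set Xp := P.nf.strip.1 with hXp
        set Np := P.nf.strip.2 with hNp
        set Xq := Q.nf.strip.1 with hXq
        set Nq := Q.nf.strip.2 with hNq
        have hsp : nuList Xp Np = P.nf := strip_spec P.nf
        have hsq : nuList Xq Nq = Q.nf := strip_spec Q.nf
        have hXpP : ∀ x ∈ Xp.map Prod.fst, x ∈ P.binders := by
          intro x hx
          refine hbp x ?_
          rw [← hsp, binders_nuList]
          exact List.mem_append_left _ hx
        have hXqQ : ∀ x ∈ Xq.map Prod.fst, x ∈ Q.binders := by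
          intro x hx
          refine hbq x ?_
          rw [← hsq, binders_nuList]
          exact List.mem_append_left _ hx
        have c1 : ∀ x ∈ Xp.map Prod.fst, x ∉ (nuList Xq Nq).fn := by
          intro x hx hc
          rw [hsq] at hc
          exact hPQ x (hXpP x hx) (hfnq hc)
        have c2 : ∀ x ∈ Xq.map Prod.fst, x ∉ Np.fn := by
          intro x hx hc
          rcases mem_fn_nuList Xp Np hc with hm | hm
          · rw [hsp] at hm
            exact hQP x (hXqQ x hx) (hfnp hm)
          · exact hdisj x (hXpP x hm) (hXqQ x hx)
        refine ⟨?_, ?_, ?_⟩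
        · refine SC.trans hsc0 ?_
          rw [← hsp, ← hsq]
          exact sc_merge Xp Xq Np Nq c1 c2
        · refine (fn_nuList_append_par Xp Xq Np Nq).trans ?_
          rw [hsp, hsq, hfpar]
          exact Finset.union_subset_union hfnp hfnq
        · intro y hy
          rcases mem_binders_nuList_append_par Xp Xq Np Nq hy with hm | hm
          · rw [hsp] at hm
            rw [hbpar, List.mem_append]
            exact Or.inl (hbp y hm)
          · rw [hsq] at hm
            rw [hbpar, List.mem_append]
            exact Or.inr (hbq y hm)

theorem choNf : ∀ (M : Cho A), M.binders.Nodup → (∀ x ∈ M.binders, x ∉ M.fn) →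
    SCc M M.nf ∧ M.nf.fn ⊆ M.fn ∧ (∀ y ∈ M.nf.binders, y ∈ M.binders)
  | .pre (.inp a z) P, h1, h2 => by
    have hb : (Cho.pre (.inp a z) P : Cho A).binders = z :: P.binders := rfl
    have hf : (Cho.pre (.inp a z) P : Cho A).fn = insert a (P.fn.erase z) := rfl
    rw [hb, List.nodup_cons] at h1
    have h2' : ∀ y ∈ P.binders, y ∉ P.fn := by
      intro y hy hyf
      have hne : y ≠ z := fun h => h1.1 (h ▸ hy)
      refine h2 y (by rw [hb]; exact List.mem_cons_of_mem _ hy) ?_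
      rw [hf]
      exact Finset.mem_insert_of_mem (Finset.mem_erase.mpr ⟨hne, hyf⟩)
    obtain ⟨hsc, hfn, hbs⟩ := procNf P h1.2 h2'
    have hnf : (Cho.pre (.inp a z) P : Cho A).nf = .pre (.inp a z) P.nf := by rw [Cho.nf]
    rw [hnf]
    refine ⟨SCc.preCong _ hsc, ?_, ?_⟩
    · show insert a (P.nf.fn.erase z) ⊆ insert a (P.fn.erase z)
      exact Finset.insert_subset_insert _ (Finset.erase_subset_erase _ hfn)
    · intro y hy
      rw [hb]
      rcases List.mem_cons.mp hy with rfl | hy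
      · exact List.mem_cons_self
      · exact List.mem_cons_of_mem _ (hbs y hy)
  | .pre (.out a b) P, h1, h2 => by
    have h2' : ∀ y ∈ P.binders, y ∉ P.fn := by
      intro y hy hyf
      exact h2 y hy (Finset.mem_insert_of_mem (Finset.mem_insert_of_mem hyf))
    obtain ⟨hsc, hfn, hbs⟩ := procNf P h1 h2'
    have hnf : (Cho.pre (.out a b) P : Cho A).nf = .pre (.out a b) P.nf := by rw [Cho.nf]
    rw [hnf]
    refine ⟨SCc.preCong _ hsc, ?_, hbs⟩
    show insert a (insert b P.nf.fn) ⊆ insert a (insert b P.fn)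
    exact Finset.insert_subset_insert _ (Finset.insert_subset_insert _ hfn)
  | .pre .tau P, h1, h2 => by
    obtain ⟨hsc, hfn, hbs⟩ := procNf P h1 h2
    have hnf : (Cho.pre .tau P : Cho A).nf = .pre .tau P.nf := by rw [Cho.nf]
    rw [hnf]
    exact ⟨SCc.preCong _ hsc, hfn, hbs⟩
  | .sum M N, h1, h2 => by
    have hb : (Cho.sum M N : Cho A).binders = M.binders ++ N.binders := rfl
    have hf : (Cho.sum M N : Cho A).fn = M.fn ∪ N.fn := rfl
    rw [hb, List.nodup_append] at h1
    simp only [hb, hf, List.mem_append, Finset.mem_union] at h2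
    obtain ⟨hscM, hfnM, hbM⟩ := choNf M h1.1
      (fun x hx hc => h2 x (Or.inl hx) (Or.inl hc))
    obtain ⟨hscN, hfnN, hbN⟩ := choNf N h1.2.1
      (fun x hx hc => h2 x (Or.inr hx) (Or.inr hc))
    have hnf : (Cho.sum M N : Cho A).nf = .sum M.nf N.nf := by rw [Cho.nf]
    rw [hnf]
    refine ⟨SCc.sumCong hscM hscN, ?_, ?_⟩
    · show M.nf.fn ∪ N.nf.fn ⊆ (Cho.sum M N : Cho A).fn
      rw [hf]
      exact Finset.union_subset_union hfnM hfnN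
    · intro y hy
      rw [hb, List.mem_append]
      rcases List.mem_append.mp hy with h | h
      · exact Or.inl (hbM y h)
      · exact Or.inr (hbN y h)
end

/-- For every π-term `P` (satisfying the standing
name-uniqueness convention), `P ≡ nf(P)`; in particular every π-term is
structurally congruent to a term in normal form. -/
theorem sc_nf (P : Proc Unit) (h : NameUniq P) :
    SC P P.nf ∧ ∃ Q, NFP Q ∧ SC P Q := by
  obtain ⟨h1, h2⟩ := h
  refine ⟨(procNf P h1 h2).1, ?_⟩
  obtain ⟨X, As, hAs, hsc, -, -⟩ := procEx P h1 h2
  exact ⟨nuList X (parList As), NFP.mk X As hAs, hsc⟩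

end PiCalcFormal
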